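/- For a positive functional $0 \le f \in A^\sim$, the map $T_f : (A^\sim)^\sim_n \to A^\sim$, $T_f(F) = F \cdot f$, is interval preserving: if $0 \le g \le T_f(F)$ in $A^\sim$ with $F \ge 0$, then there exists $0 \le G \le F$ in $(A^\sim)^\sim_n$ with $T_f(G) = g$. -/

import Mathlib

noncomputable section

/-- Riesz space (real vector lattice) axioms, as a `Prop`-valued class. -/
class RieszSp (E : Type*) [AddCommGroup E] [Lattice E] [Module ℝ E] : Prop where
  add_le_add_left : ∀ a b : E, a ≤ b → ∀ c : E, c + a ≤ c + b
  smul_nonneg : ∀ (r : ℝ) (a : E), 0 ≤ r → 0 ≤ a → 0 ≤ r • a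

/-- Archimedean (real) f-algebra axioms, as a `Prop`-valued class. -/
class FAlg (A : Type*) [CommRing A] [Lattice A] [Module ℝ A] extends RieszSp A : Prop where
  mul_nonneg : ∀ a b : A, 0 ≤ a → 0 ≤ b → 0 ≤ a * b
  disjoint_mul : ∀ a b c : A, a ⊓ b = 0 → 0 ≤ c → (c * a) ⊓ b = 0
  archimedean : ∀ a b : A, (∀ n : ℕ, (n : ℝ) • a ≤ b) → a ≤ 0

/-- A linear functional is order bounded if it is bounded on order intervals. -/
def OrderBddFn {E : Type*} [AddCommGroup E] [Lattice E] [Module ℝ E]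
    (φ : E →ₗ[ℝ] ℝ) : Prop :=
  ∀ a b : E, ∃ M : ℝ, ∀ x : E, a ≤ x → x ≤ b → |φ x| ≤ M

/-- A linear functional is order continuous if it sends downward directed sets with
infimum `0` to nets converging to `0`. -/
def OrdContFn {E : Type*} [AddCommGroup E] [Lattice E] [Module ℝ E]
    (φ : E →ₗ[ℝ] ℝ) : Prop :=
  ∀ s : Set E, s.Nonempty → DirectedOn (· ≥ ·) s → IsGLB s 0 →
    ∀ ε : ℝ, 0 < ε → ∃ d ∈ s, ∀ d' ∈ s, d' ≤ d → |φ d'| < ε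

/-- The data realizing `D` as the order dual `A^∼` of the f-algebra `A` (with separating
order dual) and `N` as the order continuous part `(A^∼)^∼_n` of the order bidual of `A`,
together with the Arens multiplication and its actions. -/
class DualSetting (A : Type*) [CommRing A] [Lattice A] [Module ℝ A]
    (D : Type*) [AddCommGroup D] [Lattice D] [Module ℝ D]
    (N : Type*) [CommRing N] [Lattice N] [Module ℝ N] where
  dual : D →ₗ[ℝ] A →ₗ[ℝ] ℝ
  bidual : N →ₗ[ℝ] D →ₗ[ℝ] ℝ
  dual_inj : Function.Injective dual
  bidual_inj : Function.Injective bidual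
  dual_bdd : ∀ d : D, OrderBddFn (dual d)
  dual_surj : ∀ φ : A →ₗ[ℝ] ℝ, OrderBddFn φ → ∃ d : D, dual d = φ
  dual_order : ∀ d : D, 0 ≤ d ↔ ∀ a : A, 0 ≤ a → 0 ≤ dual d a
  bidual_bdd : ∀ F : N, OrderBddFn (bidual F)
  bidual_cont : ∀ F : N, OrdContFn (bidual F)
  bidual_surj : ∀ Φ : D →ₗ[ℝ] ℝ, OrderBddFn Φ → OrdContFn Φ → ∃ F : N, bidual F = Φ
  bidual_order : ∀ F : N, 0 ≤ F ↔ ∀ d : D, 0 ≤ d → 0 ≤ bidual F d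
  separating : ∀ a : A, (∀ d : D, dual d a = 0) → a = 0
  /-- the action `f ⋅ a` of `A` on `A^∼`:  `(f ⋅ a)(b) = f (a b)` -/
  dsmul : A → D → D
  dsmul_eval : ∀ (a : A) (f : D) (b : A), dual (dsmul a f) b = dual f (a * b)
  /-- the action `F ⋅ f` of `(A^∼)^∼_n` on `A^∼`:  `(F ⋅ f)(a) = F (f ⋅ a)` -/
  nsmul : N → D → D
  nsmul_eval : ∀ (F : N) (f : D) (a : A), dual (nsmul F f) a = bidual F (dsmul a f)
  /-- the Arens product on `(A^∼)^∼_n`:  `(F * G)(f) = F (G ⋅ f)` -/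
  mul_eval : ∀ (F G : N) (f : D), bidual (F * G) f = bidual F (nsmul G f)

variable {A : Type*} [CommRing A] [Lattice A] [Module ℝ A] [FAlg A]
variable {D : Type*} [AddCommGroup D] [Lattice D] [Module ℝ D] [RieszSp D]
variable {N : Type*} [CommRing N] [Lattice N] [Module ℝ N] [FAlg N]
variable [P : DualSetting A D N]

/-! ### Auxiliary lemmas -/

section Aux

variable {E : Type*} [AddCommGroup E] [Lattice E] [Module ℝ E]

instance RieszSp.toAddLeftMono [RieszSp E] : AddLeftMono E :=
  ⟨fun c a b h => RieszSp.add_le_add_left a b h c⟩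

instance RieszSp.toAddRightMono [RieszSp E] : AddRightMono E :=
  ⟨fun c a b h => by
    simpa [add_comm _ c] using RieszSp.add_le_add_left a b h c⟩

variable [RieszSp E]

theorem rsmul_le_rsmul {r : ℝ} (hr : 0 ≤ r) {x y : E} (h : x ≤ y) : r • x ≤ r • y := by
  have h0 : (0 : E) ≤ r • (y - x) := RieszSp.smul_nonneg r (y - x) hr (by rwa [sub_nonneg])
  rw [smul_sub] at h0
  exact sub_nonneg.1 h0

theorem pos_smul_posPart {c : ℝ} (hc : 0 < c) (x : E) : (c • x) ⊔ 0 = c • (x ⊔ 0) := by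
  apply le_antisymm
  · exact sup_le (rsmul_le_rsmul hc.le le_sup_left)
      (RieszSp.smul_nonneg c _ hc.le le_sup_right)
  · have key : x ⊔ 0 ≤ c⁻¹ • ((c • x) ⊔ 0) := by
      refine sup_le ?_ (RieszSp.smul_nonneg _ _ (inv_nonneg.2 hc.le) le_sup_right)
      calc x = c⁻¹ • (c • x) := by rw [smul_smul, inv_mul_cancel₀ hc.ne', one_smul]
        _ ≤ c⁻¹ • ((c • x) ⊔ 0) := rsmul_le_rsmul (inv_nonneg.2 hc.le) le_sup_left
    calc c • (x ⊔ 0) ≤ c • (c⁻¹ • ((c • x) ⊔ 0)) := rsmul_le_rsmul hc.le key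
      _ = (c • x) ⊔ 0 := by rw [smul_smul, mul_inv_cancel₀ hc.ne', one_smul]

theorem posPart_add_le' (x y : E) : (x + y) ⊔ 0 ≤ (x ⊔ 0) + (y ⊔ 0) :=
  sup_le (add_le_add le_sup_left le_sup_left) (add_nonneg le_sup_right le_sup_right)

theorem posPart_sub_negPart' (s : E) : (s ⊔ 0) - ((-s) ⊔ 0) = s := by
  have := posPart_sub_negPart s
  simpa [posPart_def, negPart_def] using this

theorem posPart_inf_negPart' (s : E) : (s ⊔ 0) ⊓ ((-s) ⊔ 0) = 0 := by
  have := posPart_inf_negPart_eq_zero s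
  simpa [posPart_def, negPart_def] using this

/-- If `p, q ≥ 0` are disjoint, then `(p - q)⁺ = p`. -/
theorem disj_sub_posPart {p q : E} (hp : 0 ≤ p) (hq : 0 ≤ q) (h : p ⊓ q = 0) :
    (p - q) ⊔ 0 = p := by
  have h1 : (p - q) ⊔ 0 = (p ⊔ q) - q := by
    rw [sup_sub]; simp
  have h2 : p ⊓ q + (p ⊔ q) = p + q := inf_add_sup p q
  rw [h, zero_add] at h2
  rw [h1, h2]; abel

/-- `s - s ⊓ t = (s - t)⁺`. -/
theorem sub_inf_eq_posPart (s t : E) : s - s ⊓ t = (s - t) ⊔ 0 := by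
  have h1 : (s - t) ⊔ 0 = (s ⊔ t) - t := by rw [sup_sub]; simp
  have h2 : s ⊓ t + (s ⊔ t) = s + t := inf_add_sup s t
  have h3 : s ⊔ t = s + t - s ⊓ t := by rw [← h2]; abel
  rw [h1, h3]; abel

end Aux

section FAlgAux

variable {B : Type*} [CommRing B] [Lattice B] [Module ℝ B] [FAlg B]

theorem falg_mul_le_mul {a b c : B} (ha : 0 ≤ a) (h : b ≤ c) : a * b ≤ a * c := by
  have h0 : (0 : B) ≤ a * (c - b) := FAlg.mul_nonneg a (c - b) ha (by rwa [sub_nonneg])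
  rw [mul_sub] at h0
  exact sub_nonneg.1 h0

theorem falg_disj_mul_eq_zero {w w' : B} (hw : 0 ≤ w) (hw' : 0 ≤ w') (h : w ⊓ w' = 0) :
    w * w' = 0 := by
  have h1 : (w' * w) ⊓ w' = 0 := FAlg.disjoint_mul w w' w' h hw'
  have h2 : (w * w') ⊓ (w' * w) = 0 := by
    refine FAlg.disjoint_mul w' (w' * w) w ?_ hw
    rwa [inf_comm]
  rw [mul_comm w' w, inf_idem] at h2
  exact h2

/-- Multiplication by an integer scalar. -/
theorem falg_intCast_smul_mul (m : ℤ) (a c : B) :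
    (((m : ℝ)) • a) * c = (m : ℝ) • (a * c) := by
  rw [Int.cast_smul_eq_zsmul ℝ m a, Int.cast_smul_eq_zsmul ℝ m (a * c), zsmul_eq_mul,
    zsmul_eq_mul, mul_assoc]

/-- Multiplication by a rational scalar (expressed as a quotient of integers). -/
theorem falg_ratCast_smul_mul (m : ℤ) (n : ℕ) (hn : 0 < n) (a c : B) :
    (((m : ℝ) / n) • a) * c = ((m : ℝ) / n) • (a * c) := by
  have hn' : ((n : ℝ)) ≠ 0 := Nat.cast_ne_zero.2 hn.ne'
  have key : (n : ℝ) • ((((m : ℝ) / n) • a) * c) = (n : ℝ) • (((m : ℝ) / n) • (a * c)) := by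
    have h1 : (n : ℝ) • ((((m : ℝ) / n) • a) * c)
        = (((n : ℝ) • (((m : ℝ) / n) • a)) * c) := by
      have := falg_intCast_smul_mul (n : ℤ) (((m : ℝ) / n) • a) c
      simpa using this.symm
    rw [h1, smul_smul, mul_div_cancel₀ _ hn', falg_intCast_smul_mul m a c,
      smul_smul, mul_div_cancel₀ _ hn']
  have h2 : ((n : ℝ)⁻¹ • ((n : ℝ) • ((((m : ℝ) / n) • a) * c)))
      = ((n : ℝ)⁻¹ • ((n : ℝ) • (((m : ℝ) / n) • (a * c)))) := by rw [key]
  rw [smul_smul ((n : ℝ)⁻¹) ((n : ℝ)) ((((m : ℝ) / n) • a) * c),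
    smul_smul ((n : ℝ)⁻¹) ((n : ℝ)) (((m : ℝ) / n) • (a * c)),
    inv_mul_cancel₀ hn', one_smul, one_smul] at h2
  exact h2

/-- Multiplication by a real scalar, positive case. -/
theorem falg_smul_mul_of_nonneg (r : ℝ) {a c : B} (ha : 0 ≤ a) (hc : 0 ≤ c) :
    (r • a) * c = r • (a * c) := by
  set x : B := (r • a) * c - r • (a * c) with hx
  have hac : (0 : B) ≤ a * c := FAlg.mul_nonneg a c ha hc
  have bound : ∀ n : ℕ, 0 < n → x ≤ ((1 : ℝ) / n) • (a * c) ∧ -x ≤ ((1 : ℝ) / n) • (a * c) := by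
    intro n hn
    have hn' : (0 : ℝ) < n := Nat.cast_pos.2 hn
    set m : ℤ := ⌊(n : ℝ) * r⌋ with hm
    have hq1 : (m : ℝ) / n ≤ r := by
      rw [div_le_iff₀ hn']
      calc (m : ℝ) ≤ (n : ℝ) * r := Int.floor_le _
        _ = r * n := by ring
    have hq2 : r ≤ ((m : ℝ) + 1) / n := by
      rw [le_div_iff₀ hn']
      calc r * n = (n : ℝ) * r := by ring
        _ ≤ (m : ℝ) + 1 := (Int.lt_floor_add_one _).le
    have hdiff : ((m : ℝ) + 1) / n - (m : ℝ) / n = 1 / n := by field_simp; ring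
    -- monotonicity of L r := (r•a)*c and R r := r•(a*c) in r
    have hLmono : ∀ {s t : ℝ}, s ≤ t → (s • a) * c ≤ (t • a) * c := by
      intro s t hst
      have h1 : s • a ≤ t • a := by
        have h0 : (0 : B) ≤ (t - s) • a := RieszSp.smul_nonneg _ _ (by linarith) ha
        rw [sub_smul] at h0
        exact sub_nonneg.1 h0
      have h2 : (0 : B) ≤ (t • a - s • a) * c :=
        FAlg.mul_nonneg _ _ (by rwa [sub_nonneg]) hc
      rw [sub_mul] at h2
      exact sub_nonneg.1 h2
    have hRmono : ∀ {s t : ℝ}, s ≤ t → s • (a * c) ≤ t • (a * c) := by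
      intro s t hst
      have h0 : (0 : B) ≤ (t - s) • (a * c) := RieszSp.smul_nonneg _ _ (by linarith) hac
      rw [sub_smul] at h0
      exact sub_nonneg.1 h0
    have hrat1 : (((m : ℝ) / n) • a) * c = ((m : ℝ) / n) • (a * c) :=
      falg_ratCast_smul_mul m n hn a c
    have hrat2 : ((((m : ℝ) + 1) / n) • a) * c = (((m : ℝ) + 1) / n) • (a * c) := by
      have := falg_ratCast_smul_mul (m + 1) n hn a c
      simpa using this
    constructor
    · have h1 : (r • a) * c ≤ (((m : ℝ) + 1) / n) • (a * c) := by
        rw [← hrat2]; exact hLmono hq2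
      have h2 : ((m : ℝ) / n) • (a * c) ≤ r • (a * c) := hRmono hq1
      have : x ≤ (((m : ℝ) + 1) / n) • (a * c) - ((m : ℝ) / n) • (a * c) := by
        rw [hx]; exact sub_le_sub h1 h2
      calc x ≤ (((m : ℝ) + 1) / n) • (a * c) - ((m : ℝ) / n) • (a * c) := this
        _ = ((((m : ℝ) + 1) / n) - ((m : ℝ) / n)) • (a * c) := by rw [sub_smul]
        _ = ((1 : ℝ) / n) • (a * c) := by rw [hdiff]
    · have h1 : (((m : ℝ) / n) • a) * c ≤ (r • a) * c := hLmono hq1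
      have h2 : r • (a * c) ≤ (((m : ℝ) + 1) / n) • (a * c) := hRmono hq2
      have : -x ≤ (((m : ℝ) + 1) / n) • (a * c) - ((m : ℝ) / n) • (a * c) := by
        rw [hx, neg_sub]
        exact sub_le_sub h2 (by rw [← hrat1]; exact h1)
      calc -x ≤ (((m : ℝ) + 1) / n) • (a * c) - ((m : ℝ) / n) • (a * c) := this
        _ = ((((m : ℝ) + 1) / n) - ((m : ℝ) / n)) • (a * c) := by rw [sub_smul]
        _ = ((1 : ℝ) / n) • (a * c) := by rw [hdiff]
    -- end bound
  have arch : ∀ y : B, (∀ n : ℕ, 0 < n → y ≤ ((1 : ℝ) / n) • (a * c)) → y ≤ 0 := by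
    intro y hy
    refine FAlg.archimedean y (a * c) ?_
    intro k
    rcases Nat.eq_zero_or_pos k with hk | hk
    · simpa [hk] using hac
    · have hk' : (0 : ℝ) < k := Nat.cast_pos.2 hk
      calc (k : ℝ) • y ≤ (k : ℝ) • (((1 : ℝ) / k) • (a * c)) :=
            rsmul_le_rsmul hk'.le (hy k hk)
        _ = a * c := by rw [smul_smul, mul_one_div, div_self hk'.ne', one_smul]
  have h1 : x ≤ 0 := arch x fun n hn => (bound n hn).1
  have h2 : -x ≤ 0 := arch (-x) fun n hn => (bound n hn).2
  have : x = 0 := le_antisymm h1 (by rwa [neg_nonpos] at h2)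
  rw [hx] at this
  exact sub_eq_zero.1 this

/-- Multiplication commutes with real scalars in an (Archimedean) f-algebra. -/
theorem falg_smul_mul (r : ℝ) (a c : B) : (r • a) * c = r • (a * c) := by
  have hexp : ∀ b : B, b = (b ⊔ 0) - ((-b) ⊔ 0) := fun b => (posPart_sub_negPart' b).symm
  set p := a ⊔ 0 with hp
  set q := (-a) ⊔ 0 with hq
  set u := c ⊔ 0 with hu
  set v := (-c) ⊔ 0 with hv
  have hp0 : 0 ≤ p := le_sup_right
  have hq0 : 0 ≤ q := le_sup_right
  have hu0 : 0 ≤ u := le_sup_right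
  have hv0 : 0 ≤ v := le_sup_right
  have ha : a = p - q := hexp a
  have hc : c = u - v := hexp c
  rw [ha, hc]
  rw [smul_sub, sub_mul, mul_sub, mul_sub, sub_mul]
  rw [falg_smul_mul_of_nonneg r hp0 hu0, falg_smul_mul_of_nonneg r hp0 hv0,
    falg_smul_mul_of_nonneg r hq0 hu0, falg_smul_mul_of_nonneg r hq0 hv0]
  rw [mul_sub p u v, mul_sub q u v, smul_sub, smul_sub, smul_sub]

end FAlgAux

section Main

/-- The linear map `a ↦ f ⋅ a = dsmul a f` from `A` to `D`. -/
def jmap (f : D) : A →ₗ[ℝ] D where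
  toFun a := P.dsmul a f
  map_add' a b := by
    apply P.dual_inj
    refine LinearMap.ext fun c => ?_
    rw [map_add]
    simp only [LinearMap.add_apply]
    rw [P.dsmul_eval, P.dsmul_eval, P.dsmul_eval, add_mul, map_add]
  map_smul' r a := by
    apply P.dual_inj
    refine LinearMap.ext fun c => ?_
    simp only [RingHom.id_apply, map_smul, LinearMap.smul_apply]
    rw [P.dsmul_eval, P.dsmul_eval, falg_smul_mul, map_smul]

theorem jmap_apply (f : D) (a : A) : jmap (P := P) f a = P.dsmul a f := rfl

theorem dsmul_nonneg {f : D} (hf : 0 ≤ f) {a : A} (ha : 0 ≤ a) : 0 ≤ P.dsmul a f := by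
  rw [P.dual_order]
  intro b hb
  rw [P.dsmul_eval]
  exact (P.dual_order f).1 hf (a * b) (FAlg.mul_nonneg a b ha hb)

/-- Key disjointness: for `f ≥ 0` and disjoint `x, y ≥ 0` in `A`,
the functionals `f ⋅ x` and `f ⋅ y` are disjoint in `D`. -/
theorem dsmul_disjoint {f : D} (hf : 0 ≤ f) {x y : A} (hx : 0 ≤ x) (hy : 0 ≤ y)
    (hxy : x ⊓ y = 0) : (P.dsmul x f) ⊓ (P.dsmul y f) = 0 := by
  set w0 : D := (P.dsmul x f) ⊓ (P.dsmul y f) with hw0def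
  have hw0 : 0 ≤ w0 := le_inf (dsmul_nonneg hf hx) (dsmul_nonneg hf hy)
  have hxy0 : x * y = 0 := falg_disj_mul_eq_zero hx hy hxy
  -- evaluate at nonnegative b
  have hpos : ∀ b : A, 0 ≤ b → P.dual w0 b = 0 := by
    intro b hb
    have hlb : 0 ≤ P.dual w0 b := (P.dual_order w0).1 hw0 b hb
    have hub : ∀ n : ℕ, 0 < n → P.dual w0 b ≤ P.dual f (b * b) / n := by
      intro n hn
      have hn' : (0 : ℝ) < n := Nat.cast_pos.2 hn
      set c : A := b ⊓ ((n : ℝ) • y) with hc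
      have hny : (0 : A) ≤ (n : ℝ) • y := RieszSp.smul_nonneg _ _ hn'.le hy
      have hc0 : 0 ≤ c := le_inf hb hny
      have hcb : c ≤ b := inf_le_left
      set w : A := b - c with hw
      have hw0' : 0 ≤ w := by rw [hw]; rwa [sub_nonneg]
      have hwb : w ≤ b := by
        rw [hw]; exact sub_le_self b hc0
      -- w = (b - n•y)⁺
      have hwpos : w = (b - (n : ℝ) • y) ⊔ 0 := by
        rw [hw, hc]; exact sub_inf_eq_posPart b ((n : ℝ) • y)
      set w' : A := ((n : ℝ) • y - b) ⊔ 0 with hw'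
      have hw'0 : 0 ≤ w' := le_sup_right
      have hww'A : w ⊓ w' = 0 := by
        rw [hwpos, hw']
        have := posPart_inf_negPart' (b - (n : ℝ) • y)
        simpa [neg_sub] using this
      have hww' : w * w' = 0 := falg_disj_mul_eq_zero hw0' hw'0 hww'A
      have hsub : w - w' = b - (n : ℝ) • y := by
        rw [hwpos, hw']
        have := posPart_sub_negPart' (b - (n : ℝ) • y)
        simpa [neg_sub] using this
      -- n • (y * w) = b*w - w*w
      have hkey : (n : ℝ) • (y * w) = b * w - w * w := by
        have hny' : (n : ℝ) • y = b - w + w' := by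
          have h2 : (n : ℝ) • y = b - (w - w') := by rw [hsub]; abel
          rw [h2]; abel
        calc (n : ℝ) • (y * w) = ((n : ℝ) • y) * w := (falg_smul_mul _ _ _).symm
          _ = (b - w + w') * w := by rw [hny']
          _ = b * w - w * w + w' * w := by ring
          _ = b * w - w * w := by rw [mul_comm w' w, hww']; ring_nf
      have hyw_nonneg : (0 : A) ≤ y * w := FAlg.mul_nonneg y w hy hw0'
      have hbound : (n : ℝ) • (y * w) ≤ b * b := by
        rw [hkey]
        have h1 : b * w - w * w ≤ b * w :=
          sub_le_self _ (FAlg.mul_nonneg w w hw0' hw0')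
        have h2 : b * w ≤ b * b := falg_mul_le_mul hb hwb
        exact h1.trans h2
      -- pass to f
      have hf1 : (n : ℝ) * P.dual f (y * w) ≤ P.dual f (b * b) := by
        have h0 : (0 : A) ≤ b * b - (n : ℝ) • (y * w) := by rwa [sub_nonneg]
        have := (P.dual_order f).1 hf _ h0
        rw [map_sub, map_smul] at this
        have := sub_nonneg.1 (by exact this)
        simpa [smul_eq_mul] using this
      have hf2 : 0 ≤ P.dual f (y * w) :=
        (P.dual_order f).1 hf _ hyw_nonneg
      -- the term with x vanishes
      have hxc : x * c = 0 := by
        have h1 : (0 : A) ≤ x * c := FAlg.mul_nonneg x c hx hc0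
        have h2 : x * c ≤ x * ((n : ℝ) • y) := falg_mul_le_mul hx inf_le_right
        have h3 : x * ((n : ℝ) • y) = 0 := by
          rw [mul_comm, falg_smul_mul, mul_comm, hxy0, smul_zero]
        exact le_antisymm (h3 ▸ h2) h1
      -- split the evaluation
      have hsplit : P.dual w0 b = P.dual w0 c + P.dual w0 w := by
        have : b = c + w := by rw [hw]; abel
        rw [this, map_add]
      have hterm1 : P.dual w0 c ≤ P.dual (P.dsmul x f) c := by
        have h1 : w0 ≤ P.dsmul x f := inf_le_left
        have h0 : (0 : D) ≤ P.dsmul x f - w0 := by rwa [sub_nonneg]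
        have h2 := (P.dual_order _).1 h0 c hc0
        rw [map_sub P.dual (P.dsmul x f) w0] at h2
        simp only [LinearMap.sub_apply] at h2
        linarith
      have hterm2 : P.dual w0 w ≤ P.dual (P.dsmul y f) w := by
        have h1 : w0 ≤ P.dsmul y f := inf_le_right
        have h0 : (0 : D) ≤ P.dsmul y f - w0 := by rwa [sub_nonneg]
        have h2 := (P.dual_order _).1 h0 w hw0'
        rw [map_sub P.dual (P.dsmul y f) w0] at h2
        simp only [LinearMap.sub_apply] at h2
        linarith
      have hv1 : P.dual (P.dsmul x f) c = 0 := by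
        rw [P.dsmul_eval, hxc, map_zero]
      have hv2 : P.dual (P.dsmul y f) w = P.dual f (y * w) := P.dsmul_eval y f w
      have hchain : P.dual w0 b ≤ P.dual f (y * w) := by
        rw [hsplit]
        calc P.dual w0 c + P.dual w0 w ≤ 0 + P.dual f (y * w) := by
              refine add_le_add ?_ ?_
              · rw [← hv1]; exact hterm1
              · rw [← hv2]; exact hterm2
          _ = P.dual f (y * w) := by ring
      calc P.dual w0 b ≤ P.dual f (y * w) := hchain
        _ ≤ P.dual f (b * b) / n := by
            rw [le_div_iff₀ hn']
            calc P.dual f (y * w) * n = (n : ℝ) * P.dual f (y * w) := by ring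
              _ ≤ P.dual f (b * b) := hf1
    -- conclude dual w0 b ≤ 0
    have hb2 : 0 ≤ P.dual f (b * b) :=
      (P.dual_order f).1 hf _ (FAlg.mul_nonneg b b hb hb)
    by_contra hne
    have ht : 0 < P.dual w0 b := lt_of_le_of_ne hlb (Ne.symm hne)
    obtain ⟨n, hn⟩ := exists_nat_gt (P.dual f (b * b) / P.dual w0 b)
    have h1 := hub (n + 1) (Nat.succ_pos n)
    push_cast at h1
    have hn2 : P.dual f (b * b) < ((n : ℝ) + 1) * P.dual w0 b := by
      rw [div_lt_iff₀ ht] at hn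
      nlinarith [ht]
    have hcontr : P.dual f (b * b) / ((n : ℝ) + 1) < P.dual w0 b := by
      rw [div_lt_iff₀ (by positivity : (0 : ℝ) < (n : ℝ) + 1)]
      nlinarith [hn2]
    linarith [h1, hcontr]
  -- conclude w0 = 0
  apply P.dual_inj
  rw [map_zero]
  refine LinearMap.ext fun b => ?_
  have hb : b = (b ⊔ 0) - ((-b) ⊔ 0) := (posPart_sub_negPart' b).symm
  rw [hb, map_sub, hpos _ le_sup_right, hpos _ le_sup_right]
  simp

/-- The positive part of `j a` is `j (a⁺)`. -/
theorem jmap_posPart {f : D} (hf : 0 ≤ f) (a : A) :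
    (jmap (P := P) f a) ⊔ 0 = jmap (P := P) f (a ⊔ 0) := by
  set p := a ⊔ 0 with hp
  set q := (-a) ⊔ 0 with hq
  have hp0 : (0 : A) ≤ p := le_sup_right
  have hq0 : (0 : A) ≤ q := le_sup_right
  have hpq : p ⊓ q = 0 := posPart_inf_negPart' a
  have ha : a = p - q := (posPart_sub_negPart' a).symm
  have hsplit : jmap (P := P) f a = jmap (P := P) f p - jmap (P := P) f q := by
    rw [ha, map_sub]
  rw [hsplit]
  exact disj_sub_posPart (dsmul_nonneg hf hp0) (dsmul_nonneg hf hq0)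
    (dsmul_disjoint hf hp0 hq0 hpq)

end Main

/-- For `0 ≤ f ∈ A^∼`, the map `T_f F = F ⋅ f` is interval preserving. -/
theorem stmt1 (f : D) (hf : 0 ≤ f) (F : N) (hF : 0 ≤ F) (g : D)
    (hg0 : 0 ≤ g) (hgF : g ≤ P.nsmul F f) :
    ∃ G : N, 0 ≤ G ∧ G ≤ F ∧ P.nsmul G f = g := by
  classical
  set 𝔽 : D →ₗ[ℝ] ℝ := P.bidual F with h𝔽
  set j : A →ₗ[ℝ] D := jmap (P := P) f with hj
  have h𝔽pos : ∀ d : D, 0 ≤ d → 0 ≤ 𝔽 d := fun d hd => (P.bidual_order F).1 hF d hd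
  have h𝔽mono : ∀ {d d' : D}, d ≤ d' → 𝔽 d ≤ 𝔽 d' := by
    intro d d' h
    have := h𝔽pos (d' - d) (by rwa [sub_nonneg])
    rw [map_sub] at this
    linarith
  -- the sublinear functional
  set pN : D → ℝ := fun h => 𝔽 (h ⊔ 0) with hpN
  have pN_hom : ∀ c : ℝ, 0 < c → ∀ x : D, pN (c • x) = c * pN x := by
    intro c hc x
    simp only [hpN]
    rw [pos_smul_posPart hc, map_smul, smul_eq_mul]
  have pN_add : ∀ x y : D, pN (x + y) ≤ pN x + pN y := by
    intro x y
    simp only [hpN]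
    calc 𝔽 ((x + y) ⊔ 0) ≤ 𝔽 ((x ⊔ 0) + (y ⊔ 0)) := h𝔽mono (posPart_add_le' x y)
      _ = 𝔽 (x ⊔ 0) + 𝔽 (y ⊔ 0) := map_add _ _ _
  -- key inequality : g(a) ≤ 𝔽((j a)⁺)
  have hKEY : ∀ a : A, P.dual g a ≤ pN (j a) := by
    intro a
    have hpart : pN (j a) = 𝔽 (j (a ⊔ 0)) := by
      simp only [hpN]
      rw [hj, jmap_posPart hf a]
    rw [hpart]
    have ha : a = (a ⊔ 0) - ((-a) ⊔ 0) := (posPart_sub_negPart' a).symm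
    have h1 : P.dual g a = P.dual g (a ⊔ 0) - P.dual g ((-a) ⊔ 0) := by
      conv_lhs => rw [ha]
      rw [map_sub]
    have h2 : 0 ≤ P.dual g ((-a) ⊔ 0) := (P.dual_order g).1 hg0 _ le_sup_right
    have h3 : P.dual g (a ⊔ 0) ≤ P.dual (P.nsmul F f) (a ⊔ 0) := by
      have h0 : (0 : D) ≤ P.nsmul F f - g := by rwa [sub_nonneg]
      have h5 := (P.dual_order _).1 h0 _ (le_sup_right : (0 : A) ≤ a ⊔ 0)
      rw [map_sub] at h5
      simp only [LinearMap.sub_apply] at h5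
      linarith
    have h4 : P.dual (P.nsmul F f) (a ⊔ 0) = 𝔽 (j (a ⊔ 0)) := by
      rw [P.nsmul_eval]; rfl
    linarith
  have hpN0 : pN (0 : D) = 0 := by
    simp only [hpN]
    rw [sup_idem, map_zero]
  -- the partial functional on range j
  have hker : LinearMap.ker j ≤ LinearMap.ker (P.dual g) := by
    intro a ha
    rw [LinearMap.mem_ker] at ha ⊢
    have h1 : P.dual g a ≤ pN (j a) := hKEY a
    have h2 : P.dual g (-a) ≤ pN (j (-a)) := hKEY (-a)
    rw [ha, hpN0] at h1
    rw [map_neg, map_neg, ha, neg_zero, hpN0] at h2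
    linarith
  set Φ₀ : LinearMap.range j →ₗ[ℝ] ℝ :=
    ((LinearMap.ker j).liftQ (P.dual g) hker).comp
      (LinearMap.quotKerEquivRange j).symm.toLinearMap with hΦ₀def
  have hΦ₀ : ∀ (a : A) (h : j a ∈ LinearMap.range j),
      Φ₀ ⟨j a, h⟩ = P.dual g a := by
    intro a h
    simp only [hΦ₀def, LinearMap.comp_apply, LinearEquiv.coe_coe]
    rw [LinearMap.quotKerEquivRange_symm_apply_image j a h]
    rw [Submodule.mkQ_apply, Submodule.liftQ_apply]
  -- Hahn–Banach
  obtain ⟨Φ, hext, hΦle⟩ :=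
    exists_extension_of_le_sublinear ⟨LinearMap.range j, Φ₀⟩ pN pN_hom pN_add
      (by
        rintro ⟨x, hx⟩
        obtain ⟨a, rfl⟩ := hx
        show Φ₀ ⟨j a, _⟩ ≤ pN (j a)
        rw [hΦ₀ a (LinearMap.mem_range_self j a)]
        exact hKEY a)
  have hΦj : ∀ a : A, Φ (j a) = P.dual g a := by
    intro a
    have := hext ⟨j a, LinearMap.mem_range_self j a⟩
    simpa [hΦ₀ a (LinearMap.mem_range_self j a)] using this
  -- Φ is positive and dominated by 𝔽
  have hΦpos : ∀ d : D, 0 ≤ d → 0 ≤ Φ d := by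
    intro d hd
    have h1 : Φ (-d) ≤ pN (-d) := hΦle (-d)
    have h2 : pN (-d) = 0 := by
      simp only [hpN]
      rw [sup_eq_right.2 (neg_nonpos.2 hd), map_zero]
    rw [map_neg, h2] at h1
    linarith
  have hΦle𝔽 : ∀ d : D, 0 ≤ d → Φ d ≤ 𝔽 d := by
    intro d hd
    have h1 : Φ d ≤ pN d := hΦle d
    have h2 : pN d = 𝔽 d := by
      simp only [hpN]
      rw [sup_eq_left.2 hd]
    rwa [h2] at h1
  have hΦmono : ∀ {d d' : D}, d ≤ d' → Φ d ≤ Φ d' := by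
    intro d d' h
    have := hΦpos (d' - d) (by rwa [sub_nonneg])
    rw [map_sub] at this
    linarith
  -- order boundedness
  have hΦbdd : OrderBddFn Φ := by
    intro a b
    refine ⟨|Φ a| + |Φ b|, fun x hax hxb => ?_⟩
    have h1 : Φ a ≤ Φ x := hΦmono hax
    have h2 : Φ x ≤ Φ b := hΦmono hxb
    rw [abs_le]
    constructor
    · have := neg_abs_le (Φ a)
      have hb' := abs_nonneg (Φ b)
      linarith
    · have := le_abs_self (Φ b)
      have ha' := abs_nonneg (Φ a)
      linarith
  -- order continuity
  have hΦcont : OrdContFn Φ := by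
    intro s hs hdir hglb ε hε
    obtain ⟨d, hd, hdall⟩ := P.bidual_cont F s hs hdir hglb ε hε
    refine ⟨d, hd, fun d' hd' hle => ?_⟩
    have hd'0 : (0 : D) ≤ d' := hglb.1 hd'
    have h1 : 0 ≤ Φ d' := hΦpos d' hd'0
    have h2 : Φ d' ≤ 𝔽 d' := hΦle𝔽 d' hd'0
    have h3 : |P.bidual F d'| < ε := hdall d' hd' hle
    have h4 : 𝔽 d' ≤ |𝔽 d'| := le_abs_self _
    rw [abs_of_nonneg h1]
    calc Φ d' ≤ 𝔽 d' := h2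
      _ ≤ |𝔽 d'| := h4
      _ < ε := h3
  -- produce G
  obtain ⟨G, hG⟩ := P.bidual_surj Φ hΦbdd hΦcont
  refine ⟨G, ?_, ?_, ?_⟩
  · rw [P.bidual_order]
    intro d hd
    rw [hG]
    exact hΦpos d hd
  · have : (0 : N) ≤ F - G := by
      rw [P.bidual_order]
      intro d hd
      rw [map_sub]
      simp only [LinearMap.sub_apply]
      rw [hG]
      have := hΦle𝔽 d hd
      linarith
    exact sub_nonneg.1 this
  · apply P.dual_inj
    refine LinearMap.ext fun a => ?_
    rw [P.nsmul_eval, hG]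
    exact hΦj a
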